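/- Let a₁, a₂, a₃, b₁, b₂, b₃ be positive integers such that in RatFunc ℚ one has ((1 − X^{-a₁})(1 − X^{a₂})(1 − X^{a₃}))⁻¹ + ((1 − X^{-b₁})(1 − X^{-b₂})(1 − X^{b₃}))⁻¹ = 0. Then a₁ = b₁ + b₂, b₃ = a₂ + a₃, and the multiset {a₂, a₃} equals the multiset {b₁, b₂}. -/
import Mathlib
open Polynomial

lemma coeff_X_pow_mul' (p : ℚ[X]) (n d : ℕ) :
    ((X:ℚ[X]) ^ n * p).coeff d = if n ≤ d then p.coeff (d - n) else 0 := by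
  rw [mul_comm]; exact coeff_mul_X_pow' p n d

lemma trail_eq {p q : ℚ[X]} (hp : p.coeff 0 = 1) (hq : q.coeff 0 = 1) {m n : ℕ}
    (h : X ^ m * p = X ^ n * q) : m = n := by
  rcases lt_trichotomy m n with hlt | he | hgt
  · have := congrArg (fun r => Polynomial.coeff r m) h
    simp only [coeff_X_pow_mul'] at this
    rw [if_pos le_rfl, if_neg (by omega), Nat.sub_self, hp] at this
    norm_num at this
  · exact he
  · have := congrArg (fun r => Polynomial.coeff r n) h
    simp only [coeff_X_pow_mul'] at this
    rw [if_pos le_rfl, if_neg (by omega), Nat.sub_self, hq] at this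
    norm_num at this

lemma one_sub_X_pow_natDegree {n : ℕ} (hn : 0 < n) : ((1:ℚ[X]) - X ^ n).natDegree = n := by
  rw [show (1:ℚ[X]) - X ^ n = -(X ^ n - C 1) by simp, natDegree_neg, natDegree_X_pow_sub_C]

lemma one_sub_X_pow_ne_zero {n : ℕ} (hn : 0 < n) : (1:ℚ[X]) - X ^ n ≠ 0 := by
  intro he
  have := one_sub_X_pow_natDegree hn
  rw [he, natDegree_zero] at this
  omega

lemma expand2 (u v : ℕ) : ((1:ℚ[X]) - X ^ u) * (1 - X ^ v)
    = 1 - X ^ u - X ^ v + X ^ (u + v) := by ring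

lemma expand3 (u v w : ℕ) : ((1:ℚ[X]) - X ^ u) * (1 - X ^ v) * (1 - X ^ w)
    = 1 - X ^ u - X ^ v - X ^ w + X ^ (u + v) + X ^ (u + w) + X ^ (v + w) - X ^ (u + v + w) := by
  ring

lemma two_factor {u v w z : ℕ} (hu : 0 < u) (huw : u < w) (hzv : z < v)
    (h : ((1:ℚ[X]) - X ^ u) * (1 - X ^ v) = (1 - X ^ w) * (1 - X ^ z)) : u = z := by
  rw [expand2, expand2] at h
  have hc := congrArg (fun r => Polynomial.coeff r u) h
  simp only [coeff_add, coeff_sub, coeff_one, coeff_X_pow, if_true,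
    if_neg (show ¬(u = 0) by omega), if_neg (show ¬(u = u + v) by omega),
    if_neg (show ¬(u = w) by omega), if_neg (show ¬(u = w + z) by omega)] at hc
  by_contra hne
  simp only [if_neg hne] at hc
  split_ifs at hc <;> norm_num at hc

lemma cancel_case {a c d : ℕ} (hapos : 0 < a) (hcpos : 0 < c) (hdpos : 0 < d)
    (h : ((1:ℚ[X]) - X ^ a) * (1 - X ^ c) * (1 - X ^ (a + d)) =
      (1 - X ^ (a + c)) * (1 - X ^ a) * (1 - X ^ d)) : c = d := by
  have h2 : ((1:ℚ[X]) - X ^ c) * (1 - X ^ (a + d)) = (1 - X ^ (a + c)) * (1 - X ^ d) :=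
    mul_left_cancel₀ (one_sub_X_pow_ne_zero hapos) (by linear_combination h)
  exact two_factor hcpos (by omega) (by omega) h2

lemma poly_main (A₁ A₂ A₃ B₁ B₂ B₃ : ℕ)
    (ha₁ : 0 < A₁) (ha₂ : 0 < A₂) (ha₃ : 0 < A₃)
    (hb₁ : 0 < B₁) (hb₂ : 0 < B₂) (hb₃ : 0 < B₃)
    (h : (X : ℚ[X]) ^ A₁ * ((1 - X ^ B₁) * (1 - X ^ B₂) * (1 - X ^ B₃)) =
      X ^ (B₁ + B₂) * ((1 - X ^ A₁) * (1 - X ^ A₂) * (1 - X ^ A₃))) :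
    A₁ = B₁ + B₂ ∧ B₃ = A₂ + A₃ ∧ ((A₂ = B₁ ∧ A₃ = B₂) ∨ (A₂ = B₂ ∧ A₃ = B₁)) := by
  have hc0 : ∀ u v w : ℕ, 0 < u → 0 < v → 0 < w →
      (((1:ℚ[X]) - X ^ u) * (1 - X ^ v) * (1 - X ^ w)).coeff 0 = 1 := by
    intro u v w hu hv hw
    rw [Polynomial.coeff_zero_eq_eval_zero]
    simp [zero_pow hu.ne', zero_pow hv.ne', zero_pow hw.ne']
  have hA : A₁ = B₁ + B₂ :=
    trail_eq (hc0 _ _ _ hb₁ hb₂ hb₃) (hc0 _ _ _ ha₁ ha₂ ha₃) h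
  subst hA
  have h' : ((1:ℚ[X]) - X ^ B₁) * (1 - X ^ B₂) * (1 - X ^ B₃) =
      (1 - X ^ (B₁ + B₂)) * (1 - X ^ A₂) * (1 - X ^ A₃) :=
    mul_left_cancel₀ (pow_ne_zero _ X_ne_zero) h
  have hd := congrArg natDegree h'
  rw [natDegree_mul (mul_ne_zero (one_sub_X_pow_ne_zero hb₁) (one_sub_X_pow_ne_zero hb₂))
        (one_sub_X_pow_ne_zero hb₃),
      natDegree_mul (one_sub_X_pow_ne_zero hb₁) (one_sub_X_pow_ne_zero hb₂),
      natDegree_mul (mul_ne_zero (one_sub_X_pow_ne_zero (by omega)) (one_sub_X_pow_ne_zero ha₂))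
        (one_sub_X_pow_ne_zero ha₃),
      natDegree_mul (one_sub_X_pow_ne_zero (by omega : 0 < B₁ + B₂)) (one_sub_X_pow_ne_zero ha₂),
      one_sub_X_pow_natDegree hb₁, one_sub_X_pow_natDegree hb₂, one_sub_X_pow_natDegree hb₃,
      one_sub_X_pow_natDegree (by omega : 0 < B₁ + B₂), one_sub_X_pow_natDegree ha₂,
      one_sub_X_pow_natDegree ha₃] at hd
  have hB₃ : B₃ = A₂ + A₃ := by omega
  subst hB₃
  refine ⟨rfl, rfl, ?_⟩
  set m := min (min A₂ A₃) (min B₁ B₂) with hm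
  have hc := congrArg (fun r => Polynomial.coeff r m) h'
  rw [expand3, expand3] at hc
  simp only [coeff_add, coeff_sub, coeff_one, coeff_X_pow,
    if_neg (show ¬(m = 0) by omega), if_neg (show ¬(m = A₂ + A₃) by omega),
    if_neg (show ¬(m = B₁ + B₂) by omega), if_neg (show ¬(m = B₁ + (A₂ + A₃)) by omega),
    if_neg (show ¬(m = B₂ + (A₂ + A₃)) by omega),
    if_neg (show ¬(m = B₁ + B₂ + (A₂ + A₃)) by omega),
    if_neg (show ¬(m = B₁ + B₂ + A₂) by omega), if_neg (show ¬(m = B₁ + B₂ + A₃) by omega),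
    if_neg (show ¬(m = B₁ + B₂ + A₂ + A₃) by omega)] at hc
  split_ifs at hc with hB1 hB2 hA2 hA3 <;> norm_num at hc
  · exact Or.inl ⟨by omega, by omega⟩
  · -- B₁ = A₂
    have e : B₁ = A₂ := by omega
    rw [e] at h'
    have := cancel_case ha₂ hb₂ ha₃ h'
    exact Or.inl ⟨by omega, by omega⟩
  · -- B₁ = A₃
    have e : B₁ = A₃ := by omega
    rw [e] at h'
    have := cancel_case ha₃ hb₂ ha₂ (by linear_combination h')
    exact Or.inr ⟨by omega, by omega⟩
  · -- B₂ = A₂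
    have e : B₂ = A₂ := by omega
    rw [e] at h'
    have := cancel_case ha₂ hb₁ ha₃ (by linear_combination h')
    exact Or.inr ⟨by omega, by omega⟩
  · -- B₂ = A₃
    have e : B₂ = A₃ := by omega
    rw [e] at h'
    have := cancel_case ha₃ hb₁ ha₂ (by linear_combination h')
    exact Or.inl ⟨by omega, by omega⟩
  · omega


lemma ratfunc_to_poly (A₁ A₂ A₃ B₁ B₂ B₃ : ℕ)
    (ha₁ : 0 < A₁) (ha₂ : 0 < A₂) (ha₃ : 0 < A₃)
    (hb₁ : 0 < B₁) (hb₂ : 0 < B₂) (hb₃ : 0 < B₃)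
    (h : ((1 - ((RatFunc.X : RatFunc ℚ) ^ A₁)⁻¹) *
            (1 - (RatFunc.X : RatFunc ℚ) ^ A₂) *
            (1 - (RatFunc.X : RatFunc ℚ) ^ A₃))⁻¹ +
         ((1 - ((RatFunc.X : RatFunc ℚ) ^ B₁)⁻¹) *
            (1 - ((RatFunc.X : RatFunc ℚ) ^ B₂)⁻¹) *
            (1 - (RatFunc.X : RatFunc ℚ) ^ B₃))⁻¹ = 0) :
    (X : ℚ[X]) ^ A₁ * ((1 - X ^ B₁) * (1 - X ^ B₂) * (1 - X ^ B₃)) =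
      X ^ (B₁ + B₂) * ((1 - X ^ A₁) * (1 - X ^ A₂) * (1 - X ^ A₃)) := by
  have h1 : ∀ n : ℕ, 0 < n → (1 : RatFunc ℚ) - RatFunc.X ^ n ≠ 0 := by
    intro n hn he
    have hXn : (RatFunc.X : RatFunc ℚ) ^ n = 1 := (sub_eq_zero.mp he).symm
    have : (algebraMap ℚ[X] (RatFunc ℚ)) (X ^ n) = (algebraMap ℚ[X] (RatFunc ℚ)) 1 := by
      simpa [map_pow, RatFunc.algebraMap_X] using hXn
    have h2 : (X : ℚ[X]) ^ n = 1 := RatFunc.algebraMap_injective ℚ this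
    have := congrArg Polynomial.natDegree h2
    simp [Polynomial.natDegree_X_pow] at this
    omega
  have hx : (RatFunc.X : RatFunc ℚ) ≠ 0 := RatFunc.X_ne_zero
  have h2 : ∀ n : ℕ, 0 < n → (1 : RatFunc ℚ) - (RatFunc.X ^ n)⁻¹ ≠ 0 := by
    intro n hn he
    have : ((RatFunc.X : RatFunc ℚ) ^ n)⁻¹ = 1 := (sub_eq_zero.mp he).symm
    exact h1 n hn (by rw [inv_eq_one.mp this]; ring)
  have key : (RatFunc.X : RatFunc ℚ) ^ A₁ * ((1 - RatFunc.X ^ B₁) * (1 - RatFunc.X ^ B₂) * (1 - RatFunc.X ^ B₃)) =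
      RatFunc.X ^ (B₁ + B₂) * ((1 - RatFunc.X ^ A₁) * (1 - RatFunc.X ^ A₂) * (1 - RatFunc.X ^ A₃)) := by
    have hA : (1 - ((RatFunc.X : RatFunc ℚ) ^ A₁)⁻¹) * (1 - RatFunc.X ^ A₂) * (1 - RatFunc.X ^ A₃) =
        -((1 - ((RatFunc.X : RatFunc ℚ) ^ B₁)⁻¹) * (1 - (RatFunc.X ^ B₂)⁻¹) * (1 - RatFunc.X ^ B₃)) := by
      have hAne := mul_ne_zero (mul_ne_zero (h2 A₁ ha₁) (h1 A₂ ha₂)) (h1 A₃ ha₃)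
      have hBne := mul_ne_zero (mul_ne_zero (h2 B₁ hb₁) (h2 B₂ hb₂)) (h1 B₃ hb₃)
      have := eq_neg_of_add_eq_zero_left h
      rw [← inv_neg] at this
      exact inv_injective this
    field_simp at hA
    rw [pow_add]
    linear_combination hA
  apply RatFunc.algebraMap_injective ℚ
  simpa [map_pow, map_mul, map_sub, map_one, RatFunc.algebraMap_X] using key


/-- The 6-dimensional case of Theorem 2.6: the equation N⁰ = 0 for weights
{−a₁, a₂, a₃} and {−b₁, −b₂, b₃} forces a₁ = b₁ + b₂, b₃ = a₂ + a₃ and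
{a₂, a₃} = {b₁, b₂}. -/
theorem stmt_2 (a₁ a₂ a₃ b₁ b₂ b₃ : ℤ)
    (ha₁ : 0 < a₁) (ha₂ : 0 < a₂) (ha₃ : 0 < a₃)
    (hb₁ : 0 < b₁) (hb₂ : 0 < b₂) (hb₃ : 0 < b₃)
    (h : ((1 - (RatFunc.X : RatFunc ℚ) ^ (-a₁)) *
            (1 - (RatFunc.X : RatFunc ℚ) ^ a₂) *
            (1 - (RatFunc.X : RatFunc ℚ) ^ a₃))⁻¹ +
         ((1 - (RatFunc.X : RatFunc ℚ) ^ (-b₁)) *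
            (1 - (RatFunc.X : RatFunc ℚ) ^ (-b₂)) *
            (1 - (RatFunc.X : RatFunc ℚ) ^ b₃))⁻¹ = 0) :
    a₁ = b₁ + b₂ ∧ b₃ = a₂ + a₃ ∧ ({a₂, a₃} : Multiset ℤ) = {b₁, b₂} := by
  obtain ⟨A₁, rfl⟩ : ∃ n : ℕ, a₁ = (n : ℤ) := ⟨a₁.toNat, (Int.toNat_of_nonneg ha₁.le).symm⟩
  obtain ⟨A₂, rfl⟩ : ∃ n : ℕ, a₂ = (n : ℤ) := ⟨a₂.toNat, (Int.toNat_of_nonneg ha₂.le).symm⟩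
  obtain ⟨A₃, rfl⟩ : ∃ n : ℕ, a₃ = (n : ℤ) := ⟨a₃.toNat, (Int.toNat_of_nonneg ha₃.le).symm⟩
  obtain ⟨B₁, rfl⟩ : ∃ n : ℕ, b₁ = (n : ℤ) := ⟨b₁.toNat, (Int.toNat_of_nonneg hb₁.le).symm⟩
  obtain ⟨B₂, rfl⟩ : ∃ n : ℕ, b₂ = (n : ℤ) := ⟨b₂.toNat, (Int.toNat_of_nonneg hb₂.le).symm⟩
  obtain ⟨B₃, rfl⟩ : ∃ n : ℕ, b₃ = (n : ℤ) := ⟨b₃.toNat, (Int.toNat_of_nonneg hb₃.le).symm⟩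
  have hA₁ : 0 < A₁ := by exact_mod_cast ha₁
  have hA₂ : 0 < A₂ := by exact_mod_cast ha₂
  have hA₃ : 0 < A₃ := by exact_mod_cast ha₃
  have hB₁ : 0 < B₁ := by exact_mod_cast hb₁
  have hB₂ : 0 < B₂ := by exact_mod_cast hb₂
  have hB₃ : 0 < B₃ := by exact_mod_cast hb₃
  simp only [zpow_neg, zpow_natCast] at h
  have hp := ratfunc_to_poly A₁ A₂ A₃ B₁ B₂ B₃ hA₁ hA₂ hA₃ hB₁ hB₂ hB₃ h
  obtain ⟨e₁, e₂, e₃⟩ := poly_main A₁ A₂ A₃ B₁ B₂ B₃ hA₁ hA₂ hA₃ hB₁ hB₂ hB₃ hp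
  refine ⟨by exact_mod_cast e₁, by exact_mod_cast e₂, ?_⟩
  rcases e₃ with ⟨h2, h3⟩ | ⟨h2, h3⟩
  · subst h2; subst h3; rfl
  · subst h2; subst h3
    exact Multiset.cons_swap _ _ _
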